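/- Let (E_i)_{i∈ℕ} be a family of real normed spaces and let X be the ℓ∞-product, i.e., the space of x = (x_i)_{i∈ℕ} with x_i ∈ E_i and ‖x‖_X := sup_{i∈ℕ} ‖x_i‖ < ∞. Let ψ₁, ψ₂ : ℝ≥0 → ℝ≥0 be continuous, strictly increasing and vanishing at 0 (class K∞), and let V_i : E_i → ℝ≥0 satisfy ψ₁(‖x_i‖) ≤ V_i(x_i) ≤ ψ₂(‖x_i‖) for all i ∈ ℕ and x_i ∈ E_i. Let s⁰ : ℕ → ℝ satisfy 0 < s_min ≤ s⁰_i ≤ s_max for all i. Then the function V(x) := sup_{i∈ℕ} V_i(x_i)/s⁰_i satisfies (1/s_max)·ψ₁(‖x‖_X) ≤ V(x) ≤ (1/s_min)·ψ₂(‖x‖_X) for all x ∈ X. -/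

import Mathlib

open scoped NNReal

/-- Coercivity bounds for the composite Lyapunov function
`V(x) = ⨆ i, V_i(x_i) / s⁰_i` on the `ℓ∞`-product of normed spaces: if
`ψ₁(‖x_i‖) ≤ V_i(x_i) ≤ ψ₂(‖x_i‖)` with `ψ₁, ψ₂` of class `K∞` and
`0 < s_min ≤ s⁰_i ≤ s_max`, then
`(1/s_max) ψ₁(‖x‖_X) ≤ V(x) ≤ (1/s_min) ψ₂(‖x‖_X)`. -/
theorem composite_Lyapunov_coercivity
    (E : ℕ → Type*) [∀ i, NormedAddCommGroup (E i)] [∀ i, NormedSpace ℝ (E i)]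
    (ψ₁ ψ₂ : ℝ≥0 → ℝ≥0)
    (hψ₁ : Continuous ψ₁ ∧ StrictMono ψ₁ ∧ ψ₁ 0 = 0 ∧
      Filter.Tendsto ψ₁ Filter.atTop Filter.atTop)
    (hψ₂ : Continuous ψ₂ ∧ StrictMono ψ₂ ∧ ψ₂ 0 = 0 ∧
      Filter.Tendsto ψ₂ Filter.atTop Filter.atTop)
    (V : ∀ i, E i → ℝ≥0)
    (hV : ∀ (i : ℕ) (xi : E i), ψ₁ ‖xi‖₊ ≤ V i xi ∧ V i xi ≤ ψ₂ ‖xi‖₊)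
    (s0 : ℕ → ℝ≥0) (smin smax : ℝ≥0) (hsmin : 0 < smin)
    (hs0 : ∀ i, smin ≤ s0 i ∧ s0 i ≤ smax)
    (x : ∀ i, E i) (hx : BddAbove (Set.range fun i => ‖x i‖₊)) :
    (1 / smax) * ψ₁ (⨆ i, ‖x i‖₊) ≤ (⨆ i, V i (x i) / s0 i) ∧
    (⨆ i, V i (x i) / s0 i) ≤ (1 / smin) * ψ₂ (⨆ i, ‖x i‖₊) := by
  have hnorm_le : ∀ i, ‖x i‖₊ ≤ ⨆ j, ‖x j‖₊ := fun i => le_ciSup hx i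
  have hterm_ub : ∀ i, V i (x i) / s0 i ≤ (1 / smin) * ψ₂ (⨆ j, ‖x j‖₊) := by
    intro i
    rw [one_div, mul_comm, ← div_eq_mul_inv]
    exact div_le_div₀ zero_le ((hV i (x i)).2.trans (hψ₂.2.1.monotone (hnorm_le i)))
      hsmin (hs0 i).1
  have hbdd : BddAbove (Set.range fun i => V i (x i) / s0 i) :=
    ⟨(1 / smin) * ψ₂ (⨆ j, ‖x j‖₊), by rintro _ ⟨i, rfl⟩; exact hterm_ub i⟩
  constructor
  · have hmap : ψ₁ (⨆ i, ‖x i‖₊) = ⨆ i, ψ₁ ‖x i‖₊ :=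
      Monotone.map_ciSup_of_continuousAt (hψ₁.1.continuousAt) hψ₁.2.1.monotone hx
    rw [hmap, NNReal.mul_iSup]
    refine ciSup_le fun i => ?_
    calc 1 / smax * ψ₁ ‖x i‖₊ ≤ V i (x i) / s0 i := by
          rw [one_div, mul_comm, ← div_eq_mul_inv]
          have hs0pos : (0:ℝ≥0) < s0 i := hsmin.trans_le (hs0 i).1
          exact div_le_div₀ zero_le (hV i (x i)).1 hs0pos (hs0 i).2
      _ ≤ ⨆ j, V j (x j) / s0 j := le_ciSup hbdd i
  · exact ciSup_le hterm_ub
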